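/- Let (R, 𝔪) be a commutative Noetherian local ring, 𝒰 a non-principal ultrafilter on ℕ, and for each m ∈ ℕ let 𝔞_m, 𝔟_m ⊆ R be ideals. Let R# := R*/⋂_n (𝔪*)^n be the catapower, and denote by [𝔞_m]_m ⊆ R# the image of ulim_m 𝔞_m. If [𝔞_m]_m ⊆ [𝔟_m]_m, then for every 𝔪-primary ideal 𝔮 ⊆ R, the set { m ∈ ℕ : 𝔞_m ⊆ 𝔟_m + 𝔮 } belongs to 𝒰. -/

import Mathlib

open Filter

/-- The ultraproduct `ulim_m 𝔞_m` of a family of ideals `𝔞_m ⊆ R`, as an ideal of the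
ultrapower `R* = (∏_m R)/∼_𝒰`, realized as the germ ring at the ultrafilter `𝒰`. -/
def ulimIdeal {R : Type*} [CommRing R] (𝒰 : Ultrafilter ℕ) (a : ℕ → Ideal R) :
    Ideal ((𝒰 : Filter ℕ).Germ R) where
  carrier := {x | ∃ f : ℕ → R, (∀ᶠ m in (𝒰 : Filter ℕ), f m ∈ a m) ∧ x = Filter.Germ.ofFun f}
  zero_mem' := ⟨0, Filter.Eventually.of_forall fun m => (a m).zero_mem, rfl⟩
  add_mem' := by
    rintro x y ⟨f, hf, rfl⟩ ⟨g, hg, rfl⟩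
    exact ⟨f + g, (hf.and hg).mono fun m h => (a m).add_mem h.1 h.2, rfl⟩
  smul_mem' := by
    intro c x hx
    obtain ⟨f, hf, rfl⟩ := hx
    refine Filter.Germ.inductionOn c fun g => ?_
    exact ⟨g * f, hf.mono fun m h => (a m).mul_mem_left _ h, rfl⟩

/-- The kernel `⋂_n (𝔪*)^n` of the projection from the ultrapower to the catapower of a
local ring `(R, 𝔪)`. -/
def cataKernel {R : Type*} [CommRing R] [IsLocalRing R] (𝒰 : Ultrafilter ℕ) :
    Ideal ((𝒰 : Filter ℕ).Germ R) :=
  ⨅ n : ℕ, (ulimIdeal 𝒰 (fun _ => IsLocalRing.maximalIdeal R)) ^ n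

/-- If `[𝔞_m]_m ⊆ [𝔟_m]_m` in the catapower `R# = R*/⋂_n (𝔪*)^n` of a Noetherian local
ring `(R, 𝔪)`, then for every `𝔪`-primary ideal `𝔮`, the set
`{ m : 𝔞_m ⊆ 𝔟_m + 𝔮 }` belongs to the ultrafilter. -/

lemma ulimIdeal_mono {R : Type*} [CommRing R] (𝒰 : Ultrafilter ℕ) {a b : ℕ → Ideal R}
    (hab : ∀ m, a m ≤ b m) : ulimIdeal 𝒰 a ≤ ulimIdeal 𝒰 b := by
  rintro x ⟨f, hf, rfl⟩
  exact ⟨f, hf.mono fun m hm => hab m hm, rfl⟩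

lemma ulimIdeal_mul_le {R : Type*} [CommRing R] (𝒰 : Ultrafilter ℕ) (a b : ℕ → Ideal R) :
    ulimIdeal 𝒰 a * ulimIdeal 𝒰 b ≤ ulimIdeal 𝒰 (fun m => a m * b m) := by
  rw [Ideal.mul_le]
  rintro x ⟨f, hf, rfl⟩ y ⟨g, hg, rfl⟩
  exact ⟨f * g, (hf.and hg).mono fun m hm => Ideal.mul_mem_mul hm.1 hm.2, rfl⟩

lemma ulimIdeal_pow_le {R : Type*} [CommRing R] (𝒰 : Ultrafilter ℕ) (a : ℕ → Ideal R)
    (n : ℕ) : (ulimIdeal 𝒰 a) ^ n ≤ ulimIdeal 𝒰 (fun m => (a m) ^ n) := by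
  induction n with
  | zero =>
    intro x _
    refine Filter.Germ.inductionOn x fun f => ?_
    exact ⟨f, Filter.Eventually.of_forall fun m => by simp, rfl⟩
  | succ n ih =>
    calc (ulimIdeal 𝒰 a) ^ (n + 1) = (ulimIdeal 𝒰 a) ^ n * ulimIdeal 𝒰 a := pow_succ _ _
    _ ≤ ulimIdeal 𝒰 (fun m => (a m) ^ n) * ulimIdeal 𝒰 a :=
        Ideal.mul_mono_left ih
    _ ≤ ulimIdeal 𝒰 (fun m => (a m) ^ n * a m) := ulimIdeal_mul_le 𝒰 _ _
    _ = ulimIdeal 𝒰 (fun m => (a m) ^ (n + 1)) := by simp [pow_succ]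

theorem catapower_inclusion (R : Type*) [CommRing R] [IsNoetherianRing R] [IsLocalRing R]
    (𝒰 : Ultrafilter ℕ) (h𝒰 : ∀ A : Set ℕ, A.Finite → A ∉ 𝒰)
    (𝔞 𝔟 : ℕ → Ideal R)
    (h : Ideal.map (Ideal.Quotient.mk (cataKernel (R := R) 𝒰)) (ulimIdeal 𝒰 𝔞) ≤
      Ideal.map (Ideal.Quotient.mk (cataKernel (R := R) 𝒰)) (ulimIdeal 𝒰 𝔟))
    (𝔮 : Ideal R) (h𝔮 : ∃ n : ℕ, IsLocalRing.maximalIdeal R ^ n ≤ 𝔮) :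
    {m : ℕ | 𝔞 m ≤ 𝔟 m + 𝔮} ∈ 𝒰 := by
  by_contra hS
  have hSc : ∀ᶠ m in (𝒰 : Filter ℕ), ¬ 𝔞 m ≤ 𝔟 m + 𝔮 := by
    have := (Ultrafilter.compl_mem_iff_notMem (s := {m : ℕ | 𝔞 m ≤ 𝔟 m + 𝔮}) (f := 𝒰)).2 hS
    exact (by simpa [Set.compl_setOf] using this : {a | ¬𝔞 a ≤ 𝔟 a ⊔ 𝔮} ∈ 𝒰)
  have hch : ∀ m, ∃ x : R, ¬ 𝔞 m ≤ 𝔟 m + 𝔮 → (x ∈ 𝔞 m ∧ x ∉ 𝔟 m + 𝔮) := by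
    intro m
    by_cases hm : 𝔞 m ≤ 𝔟 m + 𝔮
    · exact ⟨0, fun hc => absurd hm hc⟩
    · obtain ⟨x, hx1, hx2⟩ := SetLike.not_le_iff_exists.1 hm
      exact ⟨x, fun _ => ⟨hx1, hx2⟩⟩
  choose f hf using hch
  have hfa : Filter.Germ.ofFun f ∈ ulimIdeal 𝒰 𝔞 :=
    ⟨f, hSc.mono fun m hm => (hf m hm).1, rfl⟩
  have hmap : Ideal.Quotient.mk (cataKernel (R := R) 𝒰) (Filter.Germ.ofFun f) ∈
      Ideal.map (Ideal.Quotient.mk (cataKernel (R := R) 𝒰)) (ulimIdeal 𝒰 𝔟) :=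
    h (Ideal.mem_map_of_mem _ hfa)
  rw [Ideal.mem_quotient_iff_mem_sup] at hmap
  obtain ⟨N, hN⟩ := h𝔮
  have hsup : ulimIdeal 𝒰 𝔟 ⊔ cataKernel (R := R) 𝒰 ≤ ulimIdeal 𝒰 (fun m => 𝔟 m + 𝔮) := by
    refine sup_le (ulimIdeal_mono 𝒰 fun m => le_sup_left) ?_
    calc cataKernel (R := R) 𝒰
        ≤ (ulimIdeal 𝒰 (fun _ => IsLocalRing.maximalIdeal R)) ^ N := iInf_le _ N
      _ ≤ ulimIdeal 𝒰 (fun _ => (IsLocalRing.maximalIdeal R) ^ N) := ulimIdeal_pow_le 𝒰 _ N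
      _ ≤ ulimIdeal 𝒰 (fun m => 𝔟 m + 𝔮) :=
          ulimIdeal_mono 𝒰 fun m => le_trans hN le_sup_right
  obtain ⟨g, hg, heq⟩ := hsup hmap
  have heqf : ∀ᶠ m in (𝒰 : Filter ℕ), f m = g m := by
    rwa [show (Filter.Germ.ofFun f : (𝒰 : Filter ℕ).Germ R) = Filter.Germ.ofFun g ↔
      f =ᶠ[(𝒰 : Filter ℕ)] g from Filter.Germ.coe_eq] at heq
  obtain ⟨m, hm1, hm2, hm3⟩ := (hSc.and (hg.and heqf)).exists
  exact ((hf m hm1).2) (hm3 ▸ hm2)
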